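/- Let X be a finite metric space with n points and let k > n/2 − 1 be an integer. Then for every r ≥ 0, the reduced simplicial homology H̃_k(VR_r(X); F) with coefficients in a field F vanishes. -/
import Mathlib


/-- An ordered `(m-1)`-dimensional simplex (an `m`-tuple of vertices, repetitions
allowed) of the Vietoris–Rips complex of `X` at scale `r`: a tuple whose pairwise
distances are all `≤ r`.  For `m = 0` this is the unique "empty simplex", giving
the augmentation in reduced homology. -/
def VRSimplex (X : Type*) [MetricSpace X] (r : ℝ) (m : ℕ) : Type _ :=
  {f : Fin m → X // ∀ i j, dist (f i) (f j) ≤ r}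

/-- The augmented simplicial chain complex of the Vietoris–Rips complex of `X` at
scale `r` with coefficients in `F`: `VRChain F X r m` is the free `F`-module on the
`m`-tuples spanning a simplex, so that the reduced homology `H̃_k(VR_r(X); F)` is the
homology of `VRChain F X r (k+2) → VRChain F X r (k+1) → VRChain F X r k`. -/
abbrev VRChain (F : Type*) [Field F] (X : Type*) [MetricSpace X] (r : ℝ) (m : ℕ) :=
  VRSimplex X r m →₀ F

/-- The `i`-th face of a simplex. -/
def VRface {X : Type*} [MetricSpace X] {r : ℝ} {m : ℕ}
    (f : VRSimplex X r (m + 1)) (i : Fin (m + 1)) : VRSimplex X r m :=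
  ⟨fun j => f.1 (i.succAbove j), fun _ _ => f.2 _ _⟩

/-- The simplicial boundary map `∂ = Σᵢ (-1)ⁱ (i-th face)`; in lowest degree it is
the augmentation map. -/
noncomputable def VRboundary (F : Type*) [Field F] (X : Type*) [MetricSpace X]
    (r : ℝ) (m : ℕ) : VRChain F X r (m + 1) →ₗ[F] VRChain F X r m :=
  Finsupp.lsum F fun f => LinearMap.toSpanSingleton F _
    (∑ i : Fin (m + 1), ((-1 : F) ^ (i : ℕ)) • Finsupp.single (VRface f i) 1)

namespace VRAux

variable {F : Type*} [Field F] {X : Type*} [MetricSpace X] {r : ℝ}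

theorem boundary_single {m : ℕ} (f : VRSimplex X r (m + 1)) (a : F) :
    VRboundary F X r m (Finsupp.single f a) =
      a • ∑ i : Fin (m + 1), ((-1 : F) ^ (i : ℕ)) • Finsupp.single (VRface f i) 1 := by
  simp [VRboundary, Finsupp.lsum_single, LinearMap.toSpanSingleton_apply]

theorem succAbove_val {n : ℕ} (i : Fin (n + 1)) (x : Fin n) :
    ((i.succAbove x : Fin (n + 1)) : ℕ) = if (x : ℕ) < (i : ℕ) then (x : ℕ) else (x : ℕ) + 1 := by
  by_cases h : (x : ℕ) < (i : ℕ)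
  · rw [Fin.succAbove_of_castSucc_lt _ _ (by simpa [Fin.lt_def] using h)]
    simp [h]
  · rw [Fin.succAbove_of_le_castSucc _ _ (by simp [Fin.le_def]; omega)]
    simp [h]

theorem succAbove_succAbove {m : ℕ} (i j : Fin (m + 1)) (h : (i : ℕ) ≤ (j : ℕ)) (x : Fin m) :
    (j.succ).succAbove (i.succAbove x) = (i.castSucc).succAbove (j.succAbove x) := by
  apply Fin.ext
  simp only [succAbove_val, Fin.val_succ, Fin.coe_castSucc]
  split_ifs <;> omega

theorem face_comm {m : ℕ} (f : VRSimplex X r (m + 2)) (i j : Fin (m + 1)) (h : (i : ℕ) ≤ (j : ℕ)) :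
    VRface (VRface f j.succ) i = VRface (VRface f i.castSucc) j := by
  apply Subtype.ext; funext x
  show f.1 ((j.succ).succAbove (i.succAbove x)) = f.1 ((i.castSucc).succAbove (j.succAbove x))
  rw [succAbove_succAbove i j h x]

end VRAux

namespace VRAux

variable {F : Type*} [Field F] {X : Type*} [MetricSpace X] {r : ℝ}

def ddInvol (m : ℕ) (p : Fin (m + 2) × Fin (m + 1)) : Fin (m + 2) × Fin (m + 1) :=
  if h : ((p.2 : ℕ)) < (p.1 : ℕ) then
    (p.2.castSucc, ⟨(p.1 : ℕ) - 1, by have := p.1.isLt; omega⟩)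
  else
    (p.2.succ, ⟨(p.1 : ℕ), by have := p.2.isLt; omega⟩)

theorem ddInvol_pos {m : ℕ} {p : Fin (m + 2) × Fin (m + 1)} (h : (p.2 : ℕ) < (p.1 : ℕ)) :
    ddInvol m p = (p.2.castSucc, ⟨(p.1 : ℕ) - 1, by have := p.1.isLt; omega⟩) := by
  rw [ddInvol, dif_pos h]

theorem ddInvol_neg {m : ℕ} {p : Fin (m + 2) × Fin (m + 1)} (h : ¬ (p.2 : ℕ) < (p.1 : ℕ)) :
    ddInvol m p = (p.2.succ, ⟨(p.1 : ℕ), by have := p.2.isLt; omega⟩) := by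
  rw [ddInvol, dif_neg h]

theorem ddInvol_ne (m : ℕ) (p : Fin (m + 2) × Fin (m + 1)) : ddInvol m p ≠ p := by
  by_cases h : (p.2 : ℕ) < (p.1 : ℕ)
  · rw [ddInvol_pos h]
    intro e
    have := congrArg (fun q : Fin (m + 2) × Fin (m + 1) => ((q.1 : ℕ))) e
    simp only [Fin.coe_castSucc] at this
    omega
  · rw [ddInvol_neg h]
    intro e
    have := congrArg (fun q : Fin (m + 2) × Fin (m + 1) => ((q.1 : ℕ))) e
    simp only [Fin.val_succ] at this
    omega

theorem ddInvol_invol (m : ℕ) (p : Fin (m + 2) × Fin (m + 1)) : ddInvol m (ddInvol m p) = p := by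
  by_cases h : (p.2 : ℕ) < (p.1 : ℕ)
  · rw [ddInvol_pos h, ddInvol_neg (by simp; omega)]
    refine Prod.ext ?_ ?_ <;> apply Fin.ext <;> simp <;> omega
  · rw [ddInvol_neg h, ddInvol_pos (by simp; omega)]
    refine Prod.ext ?_ ?_ <;> apply Fin.ext <;> simp <;> omega

theorem term_cancel {m : ℕ} (f : VRSimplex X r (m + 2)) (p : Fin (m + 2) × Fin (m + 1)) :
    ((-1 : F) ^ ((p.1 : ℕ) + (p.2 : ℕ))) • Finsupp.single (VRface (VRface f p.1) p.2) (1 : F)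
      + ((-1 : F) ^ (((ddInvol m p).1 : ℕ) + ((ddInvol m p).2 : ℕ))) •
          Finsupp.single (VRface (VRface f (ddInvol m p).1) (ddInvol m p).2) (1 : F) = 0 := by
  by_cases h : (p.2 : ℕ) < (p.1 : ℕ)
  · rw [ddInvol_pos h]
    set j : Fin (m + 1) := ⟨(p.1 : ℕ) - 1, by have := p.1.isLt; omega⟩ with hj
    have hp1 : p.1 = j.succ := by apply Fin.ext; simp [hj]; omega
    rw [hp1, face_comm f p.2 j (by simp [hj]; omega)]
    have hsign : ((j.succ : ℕ) + (p.2 : ℕ)) = ((p.2.castSucc : ℕ) + (j : ℕ)) + 1 := by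
      simp; omega
    rw [hsign, pow_succ, ← add_smul]
    have hz : ((-1 : F) ^ (((p.2.castSucc : ℕ)) + (j : ℕ)) * -1
        + (-1 : F) ^ (((p.2.castSucc : ℕ)) + (j : ℕ))) = 0 := by ring
    rw [hz, zero_smul]
  · rw [ddInvol_neg h]
    set i : Fin (m + 1) := ⟨(p.1 : ℕ), by have := p.2.isLt; omega⟩ with hi
    have hp1 : p.1 = i.castSucc := by apply Fin.ext; simp [hi]
    rw [hp1, ← face_comm f i p.2 (by simp [hi]; omega)]
    have hsign : ((p.2.succ : ℕ) + (i : ℕ)) = ((i.castSucc : ℕ) + (p.2 : ℕ)) + 1 := by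
      simp; omega
    rw [hsign, pow_succ, ← add_smul]
    have hz : ((-1 : F) ^ (((i.castSucc : ℕ)) + (p.2 : ℕ))
        + (-1 : F) ^ (((i.castSucc : ℕ)) + (p.2 : ℕ)) * -1) = 0 := by ring
    rw [hz, zero_smul]

theorem boundary_boundary_single {m : ℕ} (f : VRSimplex X r (m + 2)) (a : F) :
    VRboundary F X r m (VRboundary F X r (m + 1) (Finsupp.single f a)) = 0 := by
  rw [boundary_single, map_smul, map_sum]
  simp only [LinearMap.map_smul, boundary_single]
  simp only [Finset.smul_sum, smul_smul, one_mul, mul_assoc, ← pow_add]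
  simp only [mul_smul]
  rw [← Finset.sum_product', ← Finset.smul_sum]
  rw [Finset.sum_ninvolution (g := ddInvol m)
    (hg₁ := fun p => term_cancel f p)
    (hg₂ := fun p _ => ddInvol_ne m p)
    (g_mem := fun p => Finset.mem_product.mpr ⟨Finset.mem_univ _, Finset.mem_univ _⟩)
    (hg₃ := fun p => ddInvol_invol m p)]
  simp


theorem boundary_boundary {m : ℕ} (c : VRChain F X r (m + 2)) :
    VRboundary F X r m (VRboundary F X r (m + 1) c) = 0 := by
  have : (VRboundary F X r m).comp (VRboundary F X r (m + 1)) = 0 := by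
    apply Finsupp.lhom_ext
    intro f a
    simpa using boundary_boundary_single f a
  simpa using LinearMap.ext_iff.mp this c

end VRAux

namespace VRAux

variable {F : Type*} [Field F] {X : Type*} [MetricSpace X] {r : ℝ}

section Incl

variable (S : Set X)

def inclSimplex {m : ℕ} (f : VRSimplex (↥S) r m) : VRSimplex X r m :=
  ⟨fun i => ((f.1 i : ↥S) : X), fun i j => f.2 i j⟩

theorem inclSimplex_injective {m : ℕ} :
    Function.Injective (inclSimplex (r := r) S (m := m)) := by
  intro a b hab
  apply Subtype.ext; funext i
  exact Subtype.ext (congrFun (congrArg Subtype.val hab) i)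

noncomputable def chainIncl (F : Type*) [Field F] (m : ℕ) :
    VRChain F (↥S) r m →ₗ[F] VRChain F X r m :=
  Finsupp.lmapDomain F F (inclSimplex S)

theorem chainIncl_single {m : ℕ} (f : VRSimplex (↥S) r m) (a : F) :
    chainIncl S F m (Finsupp.single f a) = Finsupp.single (inclSimplex S f) a := by
  simp [chainIncl, Finsupp.lmapDomain_apply, Finsupp.mapDomain_single]

theorem chainIncl_injective (m : ℕ) : Function.Injective (chainIncl (r := r) S F m) :=
  Finsupp.mapDomain_injective (inclSimplex_injective S)

theorem inclSimplex_face {m : ℕ} (f : VRSimplex (↥S) r (m + 1)) (i : Fin (m + 1)) :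
    VRface (inclSimplex S f) i = inclSimplex S (VRface f i) := rfl

theorem chainIncl_boundary (m : ℕ) (c : VRChain F (↥S) r (m + 1)) :
    VRboundary F X r m (chainIncl S F (m + 1) c)
      = chainIncl S F m (VRboundary F (↥S) r m c) := by
  have h : (VRboundary F X r m).comp (chainIncl S F (m + 1))
      = (chainIncl S F m).comp (VRboundary F (↥S) r m) := by
    apply Finsupp.lhom_ext
    intro f a
    simp only [LinearMap.comp_apply, chainIncl_single, boundary_single, map_smul, map_sum,
      inclSimplex_face]
  exact LinearMap.ext_iff.mp h c

theorem entries_chainIncl {m : ℕ} (c' : VRChain F (↥S) r m) :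
    ∀ f ∈ (chainIncl S F m c').support, ∀ i, f.1 i ∈ S := by
  classical
  intro f hf i
  rw [chainIncl, Finsupp.lmapDomain_apply] at hf
  obtain ⟨f', _, rfl⟩ := Finset.mem_image.mp (Finsupp.mapDomain_support hf)
  exact (f'.1 i).2

theorem exists_chainIncl_eq {m : ℕ} (c : VRChain F X r m)
    (h : ∀ f ∈ c.support, ∀ i, f.1 i ∈ S) :
    ∃ c' : VRChain F (↥S) r m, chainIncl S F m c' = c := by
  classical
  refine ⟨Finsupp.comapDomain _ c (inclSimplex_injective S).injOn, ?_⟩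
  rw [chainIncl, Finsupp.lmapDomain_apply]
  apply Finsupp.mapDomain_comapDomain _ (inclSimplex_injective S)
  intro f hf
  rw [Finset.mem_coe] at hf
  exact ⟨⟨fun i => ⟨f.1 i, h f hf i⟩, fun i j => f.2 i j⟩, Subtype.ext rfl⟩

end Incl

theorem entries_boundary {m : ℕ} (P : X → Prop) (c : VRChain F X r (m + 1))
    (h : ∀ f ∈ c.support, ∀ i, P (f.1 i)) :
    ∀ g ∈ (VRboundary F X r m c).support, ∀ i, P (g.1 i) := by
  classical
  intro g hg i
  have hrep : VRboundary F X r m c = c.sum fun f a =>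
      a • ∑ i : Fin (m + 1), ((-1 : F) ^ (i : ℕ)) • Finsupp.single (VRface f i) 1 := by
    simp [VRboundary, Finsupp.lsum_apply, LinearMap.toSpanSingleton_apply]
    rfl
  rw [hrep] at hg
  obtain ⟨f, hf, hgf⟩ := Finset.mem_biUnion.mp (Finsupp.support_sum hg)
  have hgf2 := Finsupp.support_smul hgf
  obtain ⟨i0, _, hgi⟩ := Finsupp.mem_support_finset_sum _ hgf2
  have hgi2 := Finsupp.support_smul hgi
  have hg_eq : g = VRface f i0 :=
    Finset.mem_singleton.mp (Finsupp.support_single_subset hgi2)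
  subst hg_eq
  exact h f hf _

end VRAux

namespace VRAux

variable {F : Type*} [Field F] {X : Type*} [MetricSpace X] {r : ℝ}

section Cone

variable {p : X}

def coneSimplex (hp : ∀ x : X, dist p x ≤ r) {m : ℕ} (f : VRSimplex X r m) :
    VRSimplex X r (m + 1) :=
  ⟨Fin.cons p f.1, by
    intro i j
    refine Fin.cases ?_ (fun i' => ?_) i <;> refine Fin.cases ?_ (fun j' => ?_) j
    · simpa using hp p
    · simpa using hp _
    · simp only [Fin.cons_succ, Fin.cons_zero]
      rw [dist_comm]; exact hp _
    · simpa using f.2 i' j'⟩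

noncomputable def coneMap (hp : ∀ x : X, dist p x ≤ r) (F : Type*) [Field F] (m : ℕ) :
    VRChain F X r m →ₗ[F] VRChain F X r (m + 1) :=
  Finsupp.lmapDomain F F (coneSimplex hp)

theorem coneMap_single (hp : ∀ x : X, dist p x ≤ r) {m : ℕ} (f : VRSimplex X r m) (a : F) :
    coneMap hp F m (Finsupp.single f a) = Finsupp.single (coneSimplex hp f) a := by
  simp [coneMap, Finsupp.lmapDomain_apply, Finsupp.mapDomain_single]

theorem coneFace_zero (hp : ∀ x : X, dist p x ≤ r) {m : ℕ} (f : VRSimplex X r (m + 1)) :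
    VRface (coneSimplex hp f) 0 = f := by
  apply Subtype.ext; funext j
  show (Fin.cons p f.1 : Fin (m + 2) → X) ((0 : Fin (m + 2)).succAbove j) = f.1 j
  rw [Fin.zero_succAbove, Fin.cons_succ]

theorem coneFace_succ (hp : ∀ x : X, dist p x ≤ r) {m : ℕ} (f : VRSimplex X r (m + 1))
    (i : Fin (m + 1)) :
    VRface (coneSimplex hp f) i.succ = coneSimplex hp (VRface f i) := by
  apply Subtype.ext; funext j
  show (Fin.cons p f.1 : Fin (m + 2) → X) ((i.succ).succAbove j)
    = (Fin.cons p (VRface f i).1 : Fin (m + 1) → X) j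
  refine Fin.cases ?_ (fun j' => ?_) j
  · rw [Fin.succ_succAbove_zero, Fin.cons_zero, Fin.cons_zero]
  · rw [Fin.succ_succAbove_succ, Fin.cons_succ, Fin.cons_succ]
    rfl

theorem boundary_cone (hp : ∀ x : X, dist p x ≤ r) (m : ℕ) (c : VRChain F X r (m + 1)) :
    VRboundary F X r (m + 1) (coneMap hp F (m + 1) c)
      = c - coneMap hp F m (VRboundary F X r m c) := by
  have h : (VRboundary F X r (m + 1)).comp (coneMap hp F (m + 1))
      = LinearMap.id - (coneMap hp F m).comp (VRboundary F X r m) := by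
    apply Finsupp.lhom_ext
    intro f a
    simp only [LinearMap.comp_apply, coneMap_single, boundary_single, LinearMap.sub_apply,
      LinearMap.id_apply, map_smul, map_sum]
    rw [Fin.sum_univ_succ]
    simp only [coneFace_zero hp, coneFace_succ hp, Fin.val_succ, Fin.val_zero, pow_zero, one_smul,
      pow_succ, coneMap_single]
    rw [smul_add]
    rw [Finsupp.smul_single, smul_eq_mul, mul_one]
    rw [sub_eq_add_neg, ← smul_neg, ← Finset.sum_neg_distrib]
    congr 2
    apply Finset.sum_congr rfl
    intro i _
    rw [← neg_smul]
    congr 1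
    ring
  have := LinearMap.ext_iff.mp h c
  simpa using this

end Cone

end VRAux

theorem VRAux.main (F : Type*) [Field F] :
    ∀ (n : ℕ) (X : Type*) [MetricSpace X] [Fintype X], Fintype.card X ≤ n →
      ∀ (k : ℕ), Fintype.card X < 2 * k + 2 → ∀ (r : ℝ), 0 ≤ r →
      ∀ (c : VRChain F X r (k + 1)), VRboundary F X r k c = 0 →
      ∃ d : VRChain F X r (k + 2), VRboundary F X r (k + 1) d = c := by
  open VRAux in
  intro n
  induction n with
  | zero =>
    intro X _ _ hcard k hk r hr c hc
    have hE : IsEmpty X := Fintype.card_eq_zero_iff.mp (Nat.le_zero.mp hcard)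
    have hc0 : c = 0 := by
      ext f
      exact (hE.false (f.1 0)).elim
    exact ⟨0, by rw [map_zero, hc0]⟩
  | succ n IH =>
    intro X _ _ hcard k hk r hr c hc
    classical
    by_cases hA : ∃ v : X, ∀ x : X, dist v x ≤ r
    · obtain ⟨v, hv⟩ := hA
      refine ⟨coneMap hv F (k + 1) c, ?_⟩
      rw [boundary_cone, hc, map_zero, sub_zero]
    · rcases isEmpty_or_nonempty X with hE | hNE
      · have hc0 : c = 0 := by ext f; exact (hE.false (f.1 0)).elim
        exact ⟨0, by rw [map_zero, hc0]⟩
      push_neg at hA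
      obtain ⟨v⟩ := hNE
      obtain ⟨u, hu⟩ := hA v
      have huv : u ≠ v := by
        intro e; subst e
        simp at hu
        linarith
      rcases k with _ | k'
      · exfalso
        have h2 : 1 < Fintype.card X := Fintype.one_lt_card_iff_nontrivial.mpr ⟨⟨u, v, huv⟩⟩
        omega
      -- Mayer–Vietoris step
      set L : Set X := {x | dist x v ≤ r ∧ x ≠ v} with hL
      set S1 : Set X := {x | dist x v ≤ r} with hS1
      set S2 : Set X := {x | x ≠ v} with hS2
      set Pv : VRSimplex X r (k' + 2) → Prop := fun f => ∃ i, f.1 i = v with hPv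
      set a := c.filter Pv with ha
      set b := c.filter (fun f => ¬ Pv f) with hb
      have hab : a + b = c := Finsupp.filter_pos_add_filter_neg c Pv
      have ha_ent : ∀ f ∈ a.support, ∀ i, dist (f.1 i) v ≤ r := by
        intro f hf i
        rw [ha, Finsupp.support_filter, Finset.mem_filter] at hf
        obtain ⟨hfc, i0, hi0⟩ := hf
        calc dist (f.1 i) v = dist (f.1 i) (f.1 i0) := by rw [hi0]
          _ ≤ r := f.2 i i0
      have hb_ent : ∀ f ∈ b.support, ∀ i, f.1 i ≠ v := by
        intro f hf i
        rw [hb, Finsupp.support_filter, Finset.mem_filter] at hf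
        exact fun e => hf.2 ⟨i, e⟩
      have hzb : VRboundary F X r (k' + 1) a = - VRboundary F X r (k' + 1) b := by
        have h0 : VRboundary F X r (k' + 1) a + VRboundary F X r (k' + 1) b = 0 := by
          rw [← map_add, hab, hc]
        exact eq_neg_of_add_eq_zero_left h0
      have hz_cycle : VRboundary F X r k' (VRboundary F X r (k' + 1) a) = 0 :=
        boundary_boundary a
      have hz_entries : ∀ g ∈ (VRboundary F X r (k' + 1) a).support, ∀ i, g.1 i ∈ L := by
        intro g hg i
        have hg' : g ∈ (VRboundary F X r (k' + 1) b).support := by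
          rw [hzb, Finsupp.support_neg] at hg
          exact hg
        exact ⟨entries_boundary (fun x => dist x v ≤ r) a ha_ent g hg i,
          entries_boundary (fun x => x ≠ v) b hb_ent g hg' i⟩
      haveI : Fintype ↥L := Fintype.ofFinite _
      haveI : Fintype ↥S2 := Fintype.ofFinite _
      have hvL : v ∉ L := fun h => h.2 rfl
      have huL : u ∉ L := by
        intro h
        have h1 : dist u v ≤ r := h.1
        rw [dist_comm] at h1
        linarith
      have hcardL : Fintype.card ↥L + 2 ≤ Fintype.card X := by
        have hins : (insert v (insert u L.toFinset)).card = L.toFinset.card + 2 := by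
          rw [Finset.card_insert_of_notMem (by simp [Set.mem_toFinset, huv.symm, hvL]),
            Finset.card_insert_of_notMem (by simpa [Set.mem_toFinset] using huL)]
        have hle := Finset.card_le_univ (insert v (insert u L.toFinset))
        rw [hins] at hle
        rw [← Set.toFinset_card]
        simpa using hle
      have hcardS2 : Fintype.card ↥S2 + 1 ≤ Fintype.card X := by
        have hvS2 : v ∉ S2 := fun h => h rfl
        have hins : (insert v S2.toFinset).card = S2.toFinset.card + 1 :=
          Finset.card_insert_of_notMem (by simpa [Set.mem_toFinset] using hvS2)
        have hle := Finset.card_le_univ (insert v S2.toFinset)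
        rw [hins] at hle
        rw [← Set.toFinset_card]
        simpa using hle
      -- pull the connecting cycle back to the link L and fill it there
      obtain ⟨z', hz'⟩ := exists_chainIncl_eq L (VRboundary F X r (k' + 1) a) hz_entries
      have hz'_cycle : VRboundary F ↥L r k' z' = 0 := by
        apply chainIncl_injective L k'
        rw [← chainIncl_boundary, hz', hz_cycle, map_zero]
      obtain ⟨w', hw'⟩ := IH ↥L (by omega) k' (by omega) r hr z' hz'_cycle
      have hw_b : VRboundary F X r (k' + 1) (chainIncl L F (k' + 2) w')
          = VRboundary F X r (k' + 1) a := by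
        rw [chainIncl_boundary, hw', hz']
      have hw_ent := entries_chainIncl L w'
      -- part 1 : a - w is a cycle in the star of v
      have haw_ent : ∀ f ∈ (a - chainIncl L F (k' + 2) w').support, ∀ i, f.1 i ∈ S1 := by
        intro f hf i
        rcases Finset.mem_union.mp (Finsupp.support_sub hf) with h1 | h2
        · exact ha_ent f h1 i
        · exact (hw_ent f h2 i).1
      obtain ⟨c1, hc1⟩ := exists_chainIncl_eq S1 (a - chainIncl L F (k' + 2) w') haw_ent
      have hc1_cycle : VRboundary F ↥S1 r (k' + 1) c1 = 0 := by
        apply chainIncl_injective S1 (k' + 1)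
        rw [← chainIncl_boundary, hc1, map_sub, hw_b, sub_self, map_zero]
      have hvS1 : v ∈ S1 := by
        show dist v v ≤ r
        simpa using hr
      have hp : ∀ x : ↥S1, dist (⟨v, hvS1⟩ : ↥S1) x ≤ r := by
        intro x
        rw [Subtype.dist_eq, dist_comm]
        exact x.2
      have hd1' : VRboundary F ↥S1 r (k' + 2) (coneMap hp F (k' + 2) c1) = c1 := by
        rw [boundary_cone, hc1_cycle, map_zero, sub_zero]
      have hd1 : VRboundary F X r (k' + 2) (chainIncl S1 F (k' + 3) (coneMap hp F (k' + 2) c1))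
          = a - chainIncl L F (k' + 2) w' := by
        rw [chainIncl_boundary, hd1', hc1]
      -- part 2 : b + w is a cycle avoiding v
      have hbw_ent : ∀ f ∈ (b + chainIncl L F (k' + 2) w').support, ∀ i, f.1 i ∈ S2 := by
        intro f hf i
        rcases Finset.mem_union.mp (Finsupp.support_add hf) with h1 | h2
        · exact hb_ent f h1 i
        · exact (hw_ent f h2 i).2
      obtain ⟨c2, hc2⟩ := exists_chainIncl_eq S2 (b + chainIncl L F (k' + 2) w') hbw_ent
      have hc2_cycle : VRboundary F ↥S2 r (k' + 1) c2 = 0 := by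
        apply chainIncl_injective S2 (k' + 1)
        rw [← chainIncl_boundary, hc2, map_add, hw_b, hzb, add_neg_cancel, map_zero]
      obtain ⟨d2', hd2'⟩ := IH ↥S2 (by omega) (k' + 1) (by omega) r hr c2 hc2_cycle
      have hd2 : VRboundary F X r (k' + 2) (chainIncl S2 F (k' + 3) d2')
          = b + chainIncl L F (k' + 2) w' := by
        rw [chainIncl_boundary, hd2', hc2]
      refine ⟨chainIncl S1 F (k' + 3) (coneMap hp F (k' + 2) c1) + chainIncl S2 F (k' + 3) d2', ?_⟩
      rw [map_add, hd1, hd2, ← hab]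
      abel


/-- If `X` is a finite metric space with `n` points and `k > n/2 - 1` (i.e.
`n < 2k + 2`), then the reduced homology `H̃_k(VR_r(X); F)` vanishes for every
`r ≥ 0`: every reduced `k`-cycle is a boundary. -/
theorem vietorisRips_reduced_homology_vanishes (F : Type*) [Field F]
    (X : Type*) [MetricSpace X] [Fintype X] (k : ℕ)
    (hcard : Fintype.card X < 2 * k + 2) (r : ℝ) (hr : 0 ≤ r)
    (c : VRChain F X r (k + 1)) (hc : VRboundary F X r k c = 0) :
    ∃ d : VRChain F X r (k + 2), VRboundary F X r (k + 1) d = c := by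
  exact VRAux.main F (Fintype.card X) X le_rfl k hcard r hr c hc
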